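/- Let f be in the class C and suppose Ψ_f is lattice distributed on ℤ (i.e. dΨ_f(ℤ) = 1 and dΨ_f(βℤ) < 1 for every β > 1). Then for every A > 0 there is a constant K(A) such that #{p ≤ x : p prime, f(p) ∉ ℤ} ≤ K(A)·x·(log x)^{−A} for all x ≥ 2. -/

import Mathlib

open MeasureTheory Filter

noncomputable section

/-- A strongly additive arithmetic function: `f (m * n) = f m + f n` for coprime `m, n`,
and `f (p ^ k) = f p` for every prime `p` and `k ≥ 1`. -/
def StronglyAdditive (f : ℕ → ℝ) : Prop :=
  (∀ m n : ℕ, Nat.Coprime m n → f (m * n) = f m + f n) ∧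
    (∀ p k : ℕ, p.Prime → 1 ≤ k → f (p ^ k) = f p)

/-- The finset of primes `p ≤ x`. -/
def primesBelow (x : ℝ) : Finset ℕ :=
  (Finset.range (⌊x⌋₊ + 1)).filter Nat.Prime

/-- `μ(f;x) = Σ_{p ≤ x} f(p)/p`. -/
def muf (f : ℕ → ℝ) (x : ℝ) : ℝ := ∑ p ∈ primesBelow x, f p / p

/-- `σ²(f;x) = Σ_{p ≤ x} (f(p)²/p)(1 − 1/p)`. -/
def sigma2 (f : ℕ → ℝ) (x : ℝ) : ℝ :=
  ∑ p ∈ primesBelow x, f p ^ 2 / p * (1 - 1 / p)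

/-- `σ(f;x)`. -/
def sigmaf (f : ℕ → ℝ) (x : ℝ) : ℝ := Real.sqrt (sigma2 f x)

/-- `D_f(x;Δ) = (1/x)·#{n ≤ x : f(n) ≥ μ(f;x) + Δ·σ(f;x)}`. -/
def Df (f : ℕ → ℝ) (x Δ : ℝ) : ℝ :=
  (((Finset.Icc 1 ⌊x⌋₊).filter fun n => muf f x + Δ * sigmaf f x ≤ f n).card : ℝ) / x

/-- A (right-continuous, nondecreasing) Stieltjes function is a distribution function if it
tends to `0` at `−∞` and to `1` at `+∞`. -/
def IsDistributionFunction (Ψ : StieltjesFunction ℝ) : Prop :=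
  Tendsto (fun t => Ψ t) atBot (nhds (0 : ℝ)) ∧ Tendsto (fun t => Ψ t) atTop (nhds (1 : ℝ))

/-- `loglog x`. -/
def loglog (x : ℝ) : ℝ := Real.log (Real.log x)

/-- Membership in the class `𝒞`, with associated distribution function `Ψ` (denoted `Ψ_f`). -/
structure InClassC (f : ℕ → ℝ) (Ψ : StieltjesFunction ℝ) : Prop where
  strongAdd : StronglyAdditive f
  pos : ∀ p : ℕ, p.Prime → 0 < f p
  tail : ∀ A : ℝ, 0 < A → ∃ c : ℝ, 0 < c ∧ ∀ x : ℝ, 2 ≤ x → ∀ t : ℝ, 0 ≤ t →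
    (((primesBelow x).filter fun p => t ≤ f p).card : ℝ) ≤
      c * Real.exp (-A * t) * ((primesBelow x).card : ℝ)
  distrib : IsDistributionFunction Ψ
  secondMoment : 0 < ∫ t, t ^ 2 ∂Ψ.measure
  approx : ∀ k : ℝ, 0 < k → ∃ c : ℝ, 0 < c ∧ ∀ x : ℝ, 2 ≤ x → ∀ t : ℝ,
    |(((primesBelow x).filter fun p => f p ≤ t).card : ℝ) / ((primesBelow x).card : ℝ) - Ψ t|
      ≤ c * Real.log x ^ (-k)

/-- `Ψ` is not lattice distributed: `dΨ(αℤ) < 1` for every `α > 0`. -/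
def NotLattice (Ψ : StieltjesFunction ℝ) : Prop :=
  ∀ α : ℝ, 0 < α → Ψ.measure {x : ℝ | ∃ n : ℤ, x = α * n} < 1

/-- `Ψ` is lattice distributed on `ℤ`: `dΨ(ℤ) = 1` and `dΨ(βℤ) < 1` for every `β > 1`. -/
def LatticeOnZ (Ψ : StieltjesFunction ℝ) : Prop :=
  Ψ.measure {x : ℝ | ∃ n : ℤ, x = (n : ℝ)} = 1 ∧
    ∀ β : ℝ, 1 < β → Ψ.measure {x : ℝ | ∃ n : ℤ, x = β * n} < 1

/-- Lemma 4.18: if `Ψ_f` is lattice distributed on `ℤ` then for every `A > 0`,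
`#{p ≤ x : f(p) ∉ ℤ} ≤ K(A)·x·(log x)^{−A}`. -/
theorem stmt17 (f : ℕ → ℝ) (Ψ : StieltjesFunction ℝ) (hf : InClassC f Ψ)
    (hlat : LatticeOnZ Ψ) :
    ∀ A : ℝ, 0 < A → ∃ K : ℝ, 0 < K ∧ ∀ x : ℝ, 2 ≤ x →
      ({p : ℕ | p ∈ primesBelow x ∧ ¬∃ k : ℤ, f p = (k : ℝ)}.ncard : ℝ)
        ≤ K * x * Real.log x ^ (-A) := by
  classical
  intro A hA
  obtain ⟨c, hc, happrox⟩ := hf.approx (A + 1) (by linarith)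
  obtain ⟨c₁, hc₁, htail⟩ := hf.tail 1 one_pos
  refine ⟨2 * c * (A + 1) + c₁, by positivity, ?_⟩
  intro x hx
  have hx1 : (1:ℝ) < x := by linarith
  set S := primesBelow x with hSdef
  set L := Real.log x with hLdef
  have hL0 : 0 < L := Real.log_pos hx1
  have hLA : (0:ℝ) < L ^ (-A) := Real.rpow_pos_of_pos hL0 _
  have hLA1 : (0:ℝ) < L ^ (-(A+1)) := Real.rpow_pos_of_pos hL0 _
  have hfloor : 2 ≤ ⌊x⌋₊ := Nat.le_floor (by exact_mod_cast hx)
  have h2S : 2 ∈ S := by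
    simp only [hSdef, primesBelow, Finset.mem_filter, Finset.mem_range]
    exact ⟨by omega, Nat.prime_two⟩
  have hn0 : (0:ℝ) < (S.card : ℝ) := by
    have : 0 < S.card := Finset.card_pos.mpr ⟨2, h2S⟩
    exact_mod_cast this
  set n : ℝ := (S.card : ℝ) with hndef
  have hnx : n ≤ x := by
    have hsub : S ⊆ Finset.Ico 2 (⌊x⌋₊ + 1) := by
      intro p hp
      simp only [hSdef, primesBelow, Finset.mem_filter, Finset.mem_range] at hp
      exact Finset.mem_Ico.mpr ⟨hp.2.two_le, hp.1⟩
    have h1 : S.card ≤ ⌊x⌋₊ + 1 - 2 := by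
      simpa using Finset.card_le_card hsub
    have h2 : (S.card : ℝ) ≤ (⌊x⌋₊ : ℝ) := by
      have : S.card ≤ ⌊x⌋₊ := by omega
      exact_mod_cast this
    exact h2.trans (Nat.floor_le (by linarith))
  have hZmeas : MeasurableSet {x : ℝ | ∃ n : ℤ, x = (n : ℝ)} := by
    have he : {x : ℝ | ∃ n : ℤ, x = (n : ℝ)} = Set.range ((↑) : ℤ → ℝ) := by
      ext y; simp [Set.mem_range, eq_comm]
    rw [he]
    exact (Set.countable_range _).measurableSet
  have hunivΨ : Ψ.measure Set.univ = 1 := by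
    rw [Ψ.measure_univ hf.distrib.1 hf.distrib.2]
    norm_num
  have hcompl0 : Ψ.measure {x : ℝ | ∃ n : ℤ, x = (n : ℝ)}ᶜ = 0 := by
    rw [measure_compl hZmeas (by rw [hlat.1]; exact ENNReal.one_ne_top), hunivΨ, hlat.1,
      tsub_self]
  have hpsi : ∀ (k : ℕ) (t : ℝ), (k:ℝ) < t → t < (k:ℝ) + 1 → Ψ t = Ψ k := by
    intro k t h1 h2
    have hsub : Set.Ioc (k:ℝ) t ⊆ {x : ℝ | ∃ n : ℤ, x = (n : ℝ)}ᶜ := by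
      intro y hy
      simp only [Set.mem_compl_iff, Set.mem_setOf_eq, not_exists]
      intro m hm
      have hy1 : (k:ℝ) < y := hy.1
      have hy2 : y ≤ t := hy.2
      rw [hm] at hy1 hy2
      have e1 : (k:ℤ) < m := by exact_mod_cast hy1
      have e2 : (m:ℝ) < (k:ℝ) + 1 := lt_of_le_of_lt hy2 h2
      have e3 : m < (k:ℤ) + 1 := by exact_mod_cast e2
      omega
    have h0 : Ψ.measure (Set.Ioc (k:ℝ) t) = 0 := measure_mono_null hsub hcompl0
    rw [Ψ.measure_Ioc] at h0
    have h3 := ENNReal.ofReal_eq_zero.mp h0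
    have hmono := Ψ.mono h1.le
    linarith
  set T := ⌈A * Real.log L⌉₊ with hTdef
  set Bk : ℕ → Finset ℕ := fun k => S.filter (fun p => (k:ℝ) < f p ∧ f p < (k:ℝ) + 1)
    with hBkdef
  have hBk : ∀ k : ℕ, ((Bk k).card : ℝ) ≤ 2 * c * L ^ (-(A+1)) * n := by
    intro k
    rcases Finset.eq_empty_or_nonempty (Bk k) with he | hne
    · rw [he]
      simp only [Finset.card_empty, Nat.cast_zero]
      positivity
    · obtain ⟨p, hp, hmax⟩ := Finset.exists_max_image (Bk k) f hne
      have hp' : p ∈ S ∧ (k:ℝ) < f p ∧ f p < (k:ℝ) + 1 := by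
        simpa only [hBkdef, Finset.mem_filter] using hp
      set t := f p with htdef
      have hkt : (k:ℝ) < t := hp'.2.1
      have htk1 : t < (k:ℝ) + 1 := hp'.2.2
      have hdisj : Disjoint (Bk k) (S.filter (fun q => f q ≤ (k:ℝ))) := by
        rw [Finset.disjoint_left]
        intro q hq hq'
        simp only [hBkdef, Finset.mem_filter] at hq hq'
        linarith [hq.2.1, hq'.2]
      have hsub : Bk k ∪ S.filter (fun q => f q ≤ (k:ℝ)) ⊆ S.filter (fun q => f q ≤ t) := by
        intro q hq
        rcases Finset.mem_union.mp hq with h | h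
        · have h' : q ∈ S ∧ (k:ℝ) < f q ∧ f q < (k:ℝ) + 1 := by
            simpa only [hBkdef, Finset.mem_filter] using h
          exact Finset.mem_filter.mpr ⟨h'.1, hmax q h⟩
        · have h' := Finset.mem_filter.mp h
          exact Finset.mem_filter.mpr ⟨h'.1, h'.2.trans hkt.le⟩
      have hcard : ((Bk k).card : ℝ) + ((S.filter (fun q => f q ≤ (k:ℝ))).card : ℝ)
          ≤ ((S.filter (fun q => f q ≤ t)).card : ℝ) := by
        have := (Finset.card_union_of_disjoint hdisj) ▸ Finset.card_le_card hsub
        exact_mod_cast this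
      have hNt := (abs_le.mp (happrox x hx t)).2
      have hNk := (abs_le.mp (happrox x hx (k:ℝ))).1
      rw [← hSdef, ← hLdef] at hNt hNk
      have hψ : Ψ t = Ψ (k:ℝ) := hpsi k t hkt htk1
      rw [hψ] at hNt
      have hNt' : ((S.filter (fun q => f q ≤ t)).card : ℝ)
          ≤ (Ψ (k:ℝ) + c * L ^ (-(A+1))) * n := by
        rw [← hndef] at hNt
        have := (div_le_iff₀ hn0).mp (by linarith :
          ((S.filter (fun q => f q ≤ t)).card : ℝ) / n ≤ Ψ (k:ℝ) + c * L ^ (-(A+1)))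
        linarith
      have hNk' : (Ψ (k:ℝ) - c * L ^ (-(A+1))) * n
          ≤ ((S.filter (fun q => f q ≤ (k:ℝ))).card : ℝ) := by
        rw [← hndef] at hNk
        have := (le_div_iff₀ hn0).mp (by linarith :
          Ψ (k:ℝ) - c * L ^ (-(A+1)) ≤ ((S.filter (fun q => f q ≤ (k:ℝ))).card : ℝ) / n)
        linarith
      nlinarith [hcard, hNt', hNk']
  set Bfin := S.filter (fun p => ¬∃ k : ℤ, f p = (k:ℝ)) with hBfindef
  have hset : {p : ℕ | p ∈ primesBelow x ∧ ¬∃ k : ℤ, f p = (k : ℝ)} = ↑Bfin := by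
    ext p
    simp only [hBfindef, Finset.coe_filter, Set.mem_setOf_eq, hSdef]
  rw [hset, Set.ncard_coe_finset]
  have hsubB : Bfin ⊆ (Finset.range T).biUnion Bk ∪ S.filter (fun p => (T:ℝ) ≤ f p) := by
    intro p hp
    have hp' : p ∈ S ∧ ¬∃ k : ℤ, f p = (k:ℝ) := by
      simpa only [hBfindef, Finset.mem_filter] using hp
    obtain ⟨hpS, hni⟩ := hp'
    have hprime : p.Prime := by
      have := hpS
      simp only [hSdef, primesBelow, Finset.mem_filter] at this
      exact this.2
    have hfp : 0 < f p := hf.pos p hprime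
    by_cases hT : (T:ℝ) ≤ f p
    · exact Finset.mem_union_right _ (Finset.mem_filter.mpr ⟨hpS, hT⟩)
    · push_neg at hT
      refine Finset.mem_union_left _ (Finset.mem_biUnion.mpr ⟨⌊f p⌋₊, ?_, ?_⟩)
      · refine Finset.mem_range.mpr ?_
        have h1 : (⌊f p⌋₊ : ℝ) ≤ f p := Nat.floor_le hfp.le
        have h2 : (⌊f p⌋₊ : ℝ) < (T:ℝ) := lt_of_le_of_lt h1 hT
        exact_mod_cast h2
      · have h1 : (⌊f p⌋₊ : ℝ) ≤ f p := Nat.floor_le hfp.le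
        have h2 : (⌊f p⌋₊ : ℝ) < f p := by
          rcases lt_or_eq_of_le h1 with h | h
          · exact h
          · exact absurd ⟨(⌊f p⌋₊ : ℤ), by exact_mod_cast h.symm⟩ hni
        simp only [hBkdef, Finset.mem_filter]
        exact ⟨hpS, h2, Nat.lt_floor_add_one _⟩
  have htail' := htail x hx (T:ℝ) (Nat.cast_nonneg T)
  rw [← hSdef, ← hndef] at htail'
  have hcardB : (Bfin.card : ℝ)
      ≤ (T:ℝ) * (2 * c * L ^ (-(A+1)) * n) + c₁ * Real.exp (-1 * (T:ℝ)) * n := by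
    have h1 : Bfin.card ≤ ((Finset.range T).biUnion Bk).card
        + (S.filter (fun p => (T:ℝ) ≤ f p)).card :=
      (Finset.card_le_card hsubB).trans (Finset.card_union_le _ _)
    have h2 : (((Finset.range T).biUnion Bk).card : ℝ)
        ≤ (T:ℝ) * (2 * c * L ^ (-(A+1)) * n) := by
      calc (((Finset.range T).biUnion Bk).card : ℝ)
          ≤ ∑ k ∈ Finset.range T, ((Bk k).card : ℝ) := by
            exact_mod_cast Finset.card_biUnion_le
        _ ≤ ∑ _k ∈ Finset.range T, (2 * c * L ^ (-(A+1)) * n) :=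
            Finset.sum_le_sum (fun k _ => hBk k)
        _ = (T:ℝ) * (2 * c * L ^ (-(A+1)) * n) := by
            simp [Finset.sum_const, Finset.card_range, nsmul_eq_mul]
    have h1' : (Bfin.card : ℝ) ≤ (((Finset.range T).biUnion Bk).card : ℝ)
        + ((S.filter (fun p => (T:ℝ) ≤ f p)).card : ℝ) := by exact_mod_cast h1
    linarith
  have hTle : (T:ℝ) * L ^ (-(A+1)) ≤ (A+1) * L ^ (-A) := by
    by_cases hL1 : 1 ≤ L
    · have hlogL : 0 ≤ Real.log L := Real.log_nonneg hL1
      have h1 : (T:ℝ) < A * Real.log L + 1 := Nat.ceil_lt_add_one (by positivity)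
      have h2 : Real.log L ≤ L - 1 := Real.log_le_sub_one_of_pos hL0
      have h3 : (T:ℝ) ≤ (A+1) * L := by nlinarith
      have h4 : L * L ^ (-(A+1)) = L ^ (-A) := by
        rw [show (-A : ℝ) = 1 + -(A+1) by ring, Real.rpow_add hL0, Real.rpow_one]
      calc (T:ℝ) * L ^ (-(A+1)) = ((T:ℝ)) * L ^ (-(A+1)) := rfl
        _ ≤ ((A+1) * L) * L ^ (-(A+1)) := mul_le_mul_of_nonneg_right h3 hLA1.le
        _ = (A+1) * (L * L ^ (-(A+1))) := by ring
        _ = (A+1) * L ^ (-A) := by rw [h4]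
    · push_neg at hL1
      have hT0 : T = 0 := by
        apply Nat.ceil_eq_zero.mpr
        have hneg : Real.log L < 0 := Real.log_neg hL0 hL1
        nlinarith
      rw [hT0]
      simp only [Nat.cast_zero, zero_mul]
      positivity
  have hexpT : Real.exp (-1 * (T:ℝ)) ≤ L ^ (-A) := by
    by_cases hL1 : 1 ≤ L
    · have h1 : A * Real.log L ≤ (T:ℝ) := Nat.le_ceil _
      rw [Real.rpow_def_of_pos hL0]
      apply Real.exp_le_exp.mpr
      nlinarith
    · push_neg at hL1
      have h1 : (1:ℝ) ≤ L ^ (-A) := by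
        have := Real.rpow_le_rpow_of_exponent_ge (x := L) (y := (0:ℝ)) (z := -A)
          hL0 hL1.le (by linarith)
        simpa using this
      have h2 : Real.exp (-1 * (T:ℝ)) ≤ 1 := by
        rw [Real.exp_le_one_iff]
        have : (0:ℝ) ≤ (T:ℝ) := Nat.cast_nonneg T
        linarith
      linarith
  calc (Bfin.card : ℝ)
      ≤ (T:ℝ) * (2 * c * L ^ (-(A+1)) * n) + c₁ * Real.exp (-1 * (T:ℝ)) * n := hcardB
    _ ≤ ((A+1) * L ^ (-A)) * (2 * c * n) + c₁ * (L ^ (-A)) * n := by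
        have e1 : (T:ℝ) * (2 * c * L ^ (-(A+1)) * n)
            = ((T:ℝ) * L ^ (-(A+1))) * (2 * c * n) := by ring
        have e2 : ((T:ℝ) * L ^ (-(A+1))) * (2 * c * n)
            ≤ ((A+1) * L ^ (-A)) * (2 * c * n) :=
          mul_le_mul_of_nonneg_right hTle (by positivity)
        have e3 : c₁ * Real.exp (-1 * (T:ℝ)) * n ≤ c₁ * (L ^ (-A)) * n :=
          mul_le_mul_of_nonneg_right (mul_le_mul_of_nonneg_left hexpT hc₁.le) hn0.le
        linarith [e1 ▸ e2]
    _ = (2 * c * (A+1) + c₁) * L ^ (-A) * n := by ring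
    _ ≤ (2 * c * (A+1) + c₁) * L ^ (-A) * x := by
        apply mul_le_mul_of_nonneg_left hnx (by positivity)
    _ = (2 * c * (A+1) + c₁) * x * L ^ (-A) := by ring
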